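/- arXiv:2102.09488 — 5 statements merged into one kernel-verified Lean document; each statement's English description precedes it below -/
import Mathlib

section
/- Let X_0, ..., X_{T-1} be random variables with 0 ≤ X_t ≤ ε almost surely, and suppose for each t there are events A_t with P(A_t) ≥ 1 − δ_t such that on A_t, X_t = √(Γ_t · G_t) with Γ_t ≤ γ, where G_t ≥ 0 satisfies E[Σ_{t=0}^{T-1} G_t] ≤ C. Then E[Σ_{t=0}^{T-1} X_t] ≤ √(γ C T) + ε Σ_{t=0}^{T-1} δ_t. -/
open MeasureTheory
open scoped ENNReal

private lemma sqrt_le_one_add_abs (x : ℝ) : Real.sqrt x ≤ 1 + |x| := by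
  rcases le_total x 0 with h | h
  · rw [Real.sqrt_eq_zero'.mpr h]
    positivity
  · nlinarith [Real.sq_sqrt h, Real.sqrt_nonneg x, abs_of_nonneg h, sq_nonneg (Real.sqrt x - 1)]

private lemma integrable_sqrt {Ω : Type*} [MeasurableSpace Ω] {μ : Measure Ω}
    [IsProbabilityMeasure μ] {G : Ω → ℝ} (hGint : Integrable G μ) :
    Integrable (fun ω => Real.sqrt (G ω)) μ := by
  refine Integrable.mono' ((integrable_const (1 : ℝ)).add hGint.abs)
    (Real.continuous_sqrt.comp_aestronglyMeasurable hGint.1) ?_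
  filter_upwards with ω
  rw [Real.norm_eq_abs, abs_of_nonneg (Real.sqrt_nonneg _)]
  exact sqrt_le_one_add_abs _

private lemma jensen_sqrt {Ω : Type*} [MeasurableSpace Ω] {μ : Measure Ω}
    [IsProbabilityMeasure μ] {G : Ω → ℝ} (hGint : Integrable G μ)
    (hG : ∀ᵐ ω ∂μ, 0 ≤ G ω) :
    ∫ ω, Real.sqrt (G ω) ∂μ ≤ Real.sqrt (∫ ω, G ω ∂μ) := by
  exact Real.strictConcaveOn_sqrt.concaveOn.le_map_integral
    Real.continuous_sqrt.continuousOn isClosed_Ici hG hGint (integrable_sqrt hGint)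

private lemma step_bound {Ω : Type*} [MeasurableSpace Ω] (μ : Measure Ω)
    [IsProbabilityMeasure μ] (X Γ G : Ω → ℝ) (γ ε δ : ℝ) (A : Set Ω)
    (hγ : 0 ≤ γ) (hε : 0 ≤ ε)
    (hXbd : ∀ᵐ ω ∂μ, 0 ≤ X ω ∧ X ω ≤ ε)
    (hA : (1 : ℝ) - δ ≤ (μ A).toReal)
    (hXG : ∀ᵐ ω ∂μ, ω ∈ A → X ω = Real.sqrt (Γ ω * G ω) ∧ Γ ω ≤ γ)
    (hG : ∀ᵐ ω ∂μ, 0 ≤ G ω)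
    (hXint : Integrable X μ) (hGint : Integrable G μ) :
    ∫ ω, X ω ∂μ ≤ Real.sqrt γ * Real.sqrt (∫ ω, G ω ∂μ) + ε * δ := by
  set f : Ω → ℝ := fun ω => Real.sqrt γ * Real.sqrt (G ω) with hf
  have hfint : Integrable f μ := (integrable_sqrt hGint).const_mul _
  set Y : Ω → ℝ := fun ω => min (X ω) (f ω) with hY
  have hYint : Integrable Y μ := hXint.inf hfint
  set Z : Ω → ℝ := fun ω => X ω - Y ω with hZ
  have hZint : Integrable Z μ := hXint.sub hYint
  -- a.e. facts about Z
  have hZ0 : ∀ ω, 0 ≤ Z ω := fun ω => by simp [hZ, hY, min_le_left]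
  have hZle : ∀ᵐ ω ∂μ, Z ω ≤ ε := by
    filter_upwards [hXbd, hG] with ω ⟨h0, h1⟩ hg
    have : 0 ≤ Y ω := le_min h0 (by positivity)
    simp only [hZ]; linarith
  have hZA : ∀ᵐ ω ∂μ, ω ∈ A → Z ω = 0 := by
    filter_upwards [hXG, hG] with ω h hg hmem
    obtain ⟨hx, hΓ⟩ := h hmem
    have hxf : X ω ≤ f ω := by
      rw [hx]
      show Real.sqrt (Γ ω * G ω) ≤ Real.sqrt γ * Real.sqrt (G ω)
      rw [← Real.sqrt_mul hγ]
      exact Real.sqrt_le_sqrt (mul_le_mul_of_nonneg_right hΓ hg)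
    simp [hZ, hY, min_eq_left hxf]
  -- measurable version
  obtain ⟨Z', hZ'm, hZ'eq⟩ := hZint.1
  have hZ'int : Integrable Z' μ := hZint.congr hZ'eq
  set S : Set Ω := {ω | Z' ω ≠ 0} with hS
  have hSm : MeasurableSet S := (hZ'm.measurable (measurableSet_singleton 0)).compl
  have hAS : μ A ≤ μ Sᶜ := by
    refine measure_mono_ae ?_
    filter_upwards [hZA, hZ'eq] with ω h heq hmem
    have hz : Z' ω = 0 := by rw [← heq]; exact h hmem
    exact not_not.mpr hz
  have hμS : (μ S).toReal ≤ δ := by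
    have h1 : μ S = 1 - μ Sᶜ := by
      have := measure_compl hSm.compl (measure_ne_top μ _)
      simp only [compl_compl] at this
      rw [this, measure_univ]
    have h2 : μ S ≤ 1 - μ A := by
      rw [h1]; exact tsub_le_tsub_left hAS 1
    have h3 : (μ S).toReal ≤ ((1 : ℝ≥0∞) - μ A).toReal :=
      ENNReal.toReal_mono (ENNReal.sub_ne_top ENNReal.one_ne_top) h2
    rw [ENNReal.toReal_sub_of_le prob_le_one ENNReal.one_ne_top] at h3
    simp only [ENNReal.toReal_one] at h3
    linarith
  -- ∫ Z ≤ ε * δ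
  have hZint_le : ∫ ω, Z ω ∂μ ≤ ε * δ := by
    have hind : Integrable (S.indicator (fun _ => ε)) μ :=
      (integrable_const ε).indicator hSm
    have hmono : ∫ ω, Z ω ∂μ ≤ ∫ ω, S.indicator (fun _ => ε) ω ∂μ := by
      rw [integral_congr_ae hZ'eq]
      refine integral_mono_ae hZ'int hind ?_
      filter_upwards [hZle, hZ'eq] with ω h heq
      by_cases hω : ω ∈ S
      · rw [Set.indicator_of_mem hω, ← heq]; exact h
      · rw [Set.indicator_of_notMem hω]
        simp only [S, Set.mem_setOf_eq, not_not] at hω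
        simp [hω]
    rw [integral_indicator_const _ hSm, smul_eq_mul] at hmono
    calc ∫ ω, Z ω ∂μ ≤ (μ S).toReal * ε := hmono
      _ ≤ δ * ε := mul_le_mul_of_nonneg_right hμS hε
      _ = ε * δ := mul_comm _ _
  have hYle : ∫ ω, Y ω ∂μ ≤ Real.sqrt γ * Real.sqrt (∫ ω, G ω ∂μ) := by
    calc ∫ ω, Y ω ∂μ ≤ ∫ ω, f ω ∂μ :=
          integral_mono hYint hfint (fun ω => min_le_right _ _)
      _ = Real.sqrt γ * ∫ ω, Real.sqrt (G ω) ∂μ := MeasureTheory.integral_const_mul _ _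
      _ ≤ Real.sqrt γ * Real.sqrt (∫ ω, G ω ∂μ) := by
          exact mul_le_mul_of_nonneg_left (jensen_sqrt hGint hG) (Real.sqrt_nonneg _)
  have hXYZ : ∫ ω, X ω ∂μ = ∫ ω, Y ω ∂μ + ∫ ω, Z ω ∂μ := by
    rw [← integral_add hYint hZint]
    congr 1; ext ω; simp [hZ]
  rw [hXYZ]
  linarith

/-- Regret bound with high-probability, time-varying information ratio bounds. -/
theorem stmt_10 {Ω : Type*} [MeasurableSpace Ω] (μ : Measure Ω) [IsProbabilityMeasure μ]
    (T : ℕ) (X Γ G : ℕ → Ω → ℝ) (γ C ε : ℝ) (δ : ℕ → ℝ)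
    (hγ : 0 < γ) (hC : 0 < C) (hε : 0 < ε)
    (hXbd : ∀ t < T, ∀ᵐ ω ∂μ, 0 ≤ X t ω ∧ X t ω ≤ ε)
    (A : ℕ → Set Ω)
    (hA : ∀ t < T, (1 : ℝ) - δ t ≤ (μ (A t)).toReal)
    (hXG : ∀ t < T, ∀ᵐ ω ∂μ, ω ∈ A t →
      X t ω = Real.sqrt (Γ t ω * G t ω) ∧ Γ t ω ≤ γ)
    (hG : ∀ t < T, ∀ᵐ ω ∂μ, 0 ≤ G t ω)
    (hXint : ∀ t < T, Integrable (X t) μ)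
    (hGint : ∀ t < T, Integrable (G t) μ)
    (hGsum : ∫ ω, (∑ t ∈ Finset.range T, G t ω) ∂μ ≤ C) :
    ∫ ω, (∑ t ∈ Finset.range T, X t ω) ∂μ ≤
      Real.sqrt (γ * C * T) + ε * ∑ t ∈ Finset.range T, δ t := by
  set a : ℕ → ℝ := fun t => ∫ ω, G t ω ∂μ with ha
  have ha0 : ∀ t < T, 0 ≤ a t := fun t ht => integral_nonneg_of_ae (hG t ht)
  have hsplit : ∫ ω, (∑ t ∈ Finset.range T, X t ω) ∂μ = ∑ t ∈ Finset.range T, ∫ ω, X t ω ∂μ :=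
    integral_finset_sum _ (fun t ht => hXint t (Finset.mem_range.mp ht))
  have hGsplit : ∑ t ∈ Finset.range T, a t ≤ C := by
    rw [ha]
    rw [← integral_finset_sum _ (fun t ht => hGint t (Finset.mem_range.mp ht))]
    exact hGsum
  have hstep : ∀ t ∈ Finset.range T,
      ∫ ω, X t ω ∂μ ≤ Real.sqrt γ * Real.sqrt (a t) + ε * δ t := by
    intro t ht
    have ht' := Finset.mem_range.mp ht
    exact step_bound μ (X t) (Γ t) (G t) γ ε (δ t) (A t) hγ.le hε.le
      (hXbd t ht') (hA t ht') (hXG t ht') (hG t ht') (hXint t ht') (hGint t ht')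
  rw [hsplit]
  calc ∑ t ∈ Finset.range T, ∫ ω, X t ω ∂μ
      ≤ ∑ t ∈ Finset.range T, (Real.sqrt γ * Real.sqrt (a t) + ε * δ t) :=
        Finset.sum_le_sum hstep
    _ = Real.sqrt γ * ∑ t ∈ Finset.range T, Real.sqrt (a t)
        + ε * ∑ t ∈ Finset.range T, δ t := by
        rw [Finset.sum_add_distrib, Finset.mul_sum, Finset.mul_sum]
    _ ≤ Real.sqrt (γ * C * T) + ε * ∑ t ∈ Finset.range T, δ t := by
        gcongr
        -- Cauchy–Schwarz: ∑ √(a t) ≤ √(T * ∑ a t)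
        have hcs : ∑ t ∈ Finset.range T, Real.sqrt (a t)
            ≤ Real.sqrt (T * ∑ t ∈ Finset.range T, a t) := by
          have h1 : (∑ t ∈ Finset.range T, Real.sqrt (a t)) ^ 2
              ≤ (T : ℝ) * ∑ t ∈ Finset.range T, Real.sqrt (a t) ^ 2 := by
            have := sq_sum_le_card_mul_sum_sq (s := Finset.range T)
              (f := fun t => Real.sqrt (a t))
            simpa using this
          have h2 : ∑ t ∈ Finset.range T, Real.sqrt (a t) ^ 2
              = ∑ t ∈ Finset.range T, a t := by
            refine Finset.sum_congr rfl (fun t ht => ?_)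
            rw [Real.sq_sqrt (ha0 t (Finset.mem_range.mp ht))]
          rw [h2] at h1
          have h3 : 0 ≤ ∑ t ∈ Finset.range T, Real.sqrt (a t) :=
            Finset.sum_nonneg (fun t _ => Real.sqrt_nonneg _)
          calc ∑ t ∈ Finset.range T, Real.sqrt (a t)
              = Real.sqrt ((∑ t ∈ Finset.range T, Real.sqrt (a t)) ^ 2) := by
                rw [Real.sqrt_sq h3]
            _ ≤ Real.sqrt ((T : ℝ) * ∑ t ∈ Finset.range T, a t) :=
                Real.sqrt_le_sqrt h1
        calc Real.sqrt γ * ∑ t ∈ Finset.range T, Real.sqrt (a t)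
            ≤ Real.sqrt γ * Real.sqrt (T * ∑ t ∈ Finset.range T, a t) :=
              mul_le_mul_of_nonneg_left hcs (Real.sqrt_nonneg _)
          _ = Real.sqrt (γ * (T * ∑ t ∈ Finset.range T, a t)) :=
              (Real.sqrt_mul hγ.le _).symm
          _ ≤ Real.sqrt (γ * C * T) := by
              apply Real.sqrt_le_sqrt
              have h4 : (T : ℝ) * ∑ t ∈ Finset.range T, a t ≤ (T : ℝ) * C :=
                mul_le_mul_of_nonneg_left hGsplit (Nat.cast_nonneg T)
              calc γ * ((T : ℝ) * ∑ t ∈ Finset.range T, a t)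
                  ≤ γ * ((T : ℝ) * C) := mul_le_mul_of_nonneg_left h4 hγ.le
                _ = γ * C * T := by ring
end

section
/- Let p ∈ (0,1), K ≥ 2, and ε ∈ (0,1−p) sufficiently small (satisfying conditions (19a)–(19g) of the paper, e.g. ε < min{p,1−p}, (ε/K)² ≤ p(1−p)/4, ε/K ≤ p(1−p)/(4|2p−1|), ε ≤ (K−1)p/(K²(1−p)), ε ≤ (1−p)/K, ε ≤ (2(K−1)(1−p))/(3Kp)). In the uniform prior Bernoulli bandit of Example 1, the expected Shannon information gain at t = 0 of any action distribution π, g(π) = Σ_{a,a_*} π(a)(1/K) D_KL(P(R_{1,a} | A_* = a_*) ‖ P(R_{1,a})), satisfies g(π) ≤ ((K−1)ε²/K²) · 5/(2p(1−p)). -/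
lemma kl_chisq_bound (q r : ℝ) (hq0 : 0 < q) (hq1 : q < 1) (hr0 : 0 < r) (hr1 : r < 1) :
    q * Real.log (q / r) + (1 - q) * Real.log ((1 - q) / (1 - r))
      ≤ (q - r) ^ 2 / (r * (1 - r)) := by
  have hq1' : 0 < 1 - q := by linarith
  have hr1' : 0 < 1 - r := by linarith
  have h1 : Real.log (q / r) ≤ q / r - 1 :=
    Real.log_le_sub_one_of_pos (div_pos hq0 hr0)
  have h2 : Real.log ((1 - q) / (1 - r)) ≤ (1 - q) / (1 - r) - 1 :=
    Real.log_le_sub_one_of_pos (div_pos hq1' hr1')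
  calc q * Real.log (q / r) + (1 - q) * Real.log ((1 - q) / (1 - r))
      ≤ q * (q / r - 1) + (1 - q) * ((1 - q) / (1 - r) - 1) :=
        add_le_add (mul_le_mul_of_nonneg_left h1 hq0.le)
          (mul_le_mul_of_nonneg_left h2 hq1'.le)
    _ = (q - r) ^ 2 / (r * (1 - r)) := by field_simp; ring

set_option maxHeartbeats 800000 in
/-- Upper bound on the expected Shannon information gain at time 0 in Example 1. -/
theorem stmt_13 (K : ℕ) (hK : 2 ≤ K) (p ε : ℝ)
    (hp : p ∈ Set.Ioo (0:ℝ) 1) (hε : ε ∈ Set.Ioo 0 (1 - p))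
    (h1 : ε < min p (1 - p))
    (h2 : (ε / K) ^ 2 ≤ p * (1 - p) / 2)
    (h3 : (ε / K) ^ 2 ≤ p * (1 - p) / 4)
    (h4 : (ε / K) * |2 * p - 1| ≤ p * (1 - p) / 4)
    (h5 : ε ≤ ((K:ℝ) - 1) / (K:ℝ) ^ 2 * (p / (1 - p)))
    (h6 : ε ≤ (1 - p) / K)
    (h7 : ε ≤ ((K:ℝ) - 1) / K * (2 / 3) * ((1 - p) / p))
    (kl : ℝ → ℝ → ℝ)
    (hkl : ∀ q r, kl q r =
      q * Real.log (q / r) + (1 - q) * Real.log ((1 - q) / (1 - r)))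
    (π : Fin K → ℝ) (hπ0 : ∀ a, 0 ≤ π a) (hπ1 : ∑ a, π a = 1) :
    (∑ a : Fin K, ∑ astar : Fin K,
        π a * (1 / (K:ℝ)) * kl (if a = astar then p + ε else p) (p + ε / K))
      ≤ ((K:ℝ) - 1) * ε ^ 2 / (K:ℝ) ^ 2 * (5 / (2 * p * (1 - p))) := by
  obtain ⟨hp0, hp1⟩ := hp
  obtain ⟨hε0, hε1⟩ := hε
  set c : ℝ := (K : ℝ) with hc
  have hcK : (2:ℝ) ≤ c := by rw [hc]; exact_mod_cast hK
  have hc0 : (0:ℝ) < c := by linarith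
  set r : ℝ := p + ε / c with hrdef
  have hεK0 : 0 < ε / c := div_pos hε0 hc0
  have hεKε : ε / c ≤ ε := by
    rw [div_le_iff₀ hc0]; nlinarith
  clear_value c r
  have hr0 : 0 < r := by simp only [hrdef]; linarith
  have hr1 : r < 1 := by simp only [hrdef]; linarith
  -- lower bound on r*(1-r)
  have habs1 : (ε / c) * (2 * p - 1) ≤ p * (1 - p) / 4 := by
    have := le_abs_self (2 * p - 1)
    nlinarith
  have habs2 : (ε / c) * (1 - 2 * p) ≤ p * (1 - p) / 4 := by
    have := neg_abs_le (2 * p - 1)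
    nlinarith
  have hD : p * (1 - p) / 2 ≤ r * (1 - r) := by
    have : r * (1 - r) = p * (1 - p) + (ε / c) * (1 - 2 * p) - (ε / c) ^ 2 := by
      simp only [hrdef]; ring
    nlinarith
  have hDpos : 0 < r * (1 - r) := by nlinarith
  have hX : kl (p + ε) r ≤ (p + ε - r) ^ 2 / (r * (1 - r)) := by
    rw [hkl]; exact kl_chisq_bound _ _ (by linarith) (by linarith) hr0 hr1
  have hY : kl p r ≤ (p - r) ^ 2 / (r * (1 - r)) := by
    rw [hkl]; exact kl_chisq_bound _ _ hp0 hp1 hr0 hr1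
  -- compute the double sum
  have hinner : ∀ a : Fin K, ∑ astar : Fin K,
      π a * (1 / c) * kl (if a = astar then p + ε else p) r
      = π a * ((1 / c) * (kl (p + ε) r + (c - 1) * kl p r)) := by
    intro a
    have : ∀ astar : Fin K,
        π a * (1 / c) * kl (if a = astar then p + ε else p) r
        = π a * (1 / c) * kl p r
          + (if a = astar then π a * (1 / c) * (kl (p + ε) r - kl p r) else 0) := by
      intro astar
      by_cases h : a = astar <;> simp [h] <;> ring
    rw [Finset.sum_congr rfl (fun astar _ => this astar), Finset.sum_add_distrib,
      Finset.sum_const, Finset.sum_ite_eq]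
    simp only [Finset.mem_univ, if_true, Finset.card_univ, Fintype.card_fin, nsmul_eq_mul]
    rw [← hc]
    ring
  have hsum : (∑ a : Fin K, ∑ astar : Fin K,
      π a * (1 / c) * kl (if a = astar then p + ε else p) r)
      = (1 / c) * (kl (p + ε) r + (c - 1) * kl p r) := by
    rw [Finset.sum_congr rfl (fun a _ => hinner a), ← Finset.sum_mul, hπ1, one_mul]
  rw [hsum]
  -- final arithmetic
  have hc1 : (0:ℝ) < c - 1 := by linarith
  have hstep : (1 / c) * (kl (p + ε) r + (c - 1) * kl p r)
      ≤ (1 / c) * ((p + ε - r) ^ 2 / (r * (1 - r)) + (c - 1) * ((p - r) ^ 2 / (r * (1 - r)))) := by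
    apply mul_le_mul_of_nonneg_left _ (by positivity)
    exact add_le_add hX (mul_le_mul_of_nonneg_left hY hc1.le)
  refine hstep.trans ?_
  have hpr : p + ε - r = ε * (c - 1) / c := by
    rw [hrdef]; field_simp; ring
  have hpr2 : p - r = -(ε / c) := by rw [hrdef]; ring
  rw [hpr, hpr2]
  have heq : (1 / c) * ((ε * (c - 1) / c) ^ 2 / (r * (1 - r))
      + (c - 1) * ((-(ε / c)) ^ 2 / (r * (1 - r))))
      = (c - 1) * ε ^ 2 / c ^ 2 * (1 / (r * (1 - r))) := by
    field_simp [hc0.ne', hDpos.ne']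
    ring
  rw [heq]
  have hnn : (0:ℝ) ≤ (c - 1) * ε ^ 2 / c ^ 2 := by
    apply div_nonneg (by nlinarith [sq_nonneg ε]) (by positivity)
  apply mul_le_mul_of_nonneg_left _ hnn
  have h2p : (0:ℝ) < 2 * p * (1 - p) := by nlinarith
  rw [div_le_div_iff₀ hDpos h2p]
  nlinarith
end

section
/- Let p ∈ (0,1), K ≥ 2, and ε ∈ (0,1−p) sufficiently small as in the paper's conditions (19). In the uniform prior Bernoulli bandit of Example 1, at t = 0 the Shannon information ratio of any action distribution π, Γ(π) := (Δ(π))² / g(π), satisfies Γ(π) ≥ (2/5) p(1−p)(K−1). In particular, for p = 1/2 and K ≥ 2, Γ(π) ≥ K/20. -/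
/-- Upper bound on binary KL divergence by chi-squared-type bound. -/
lemma kl_ub_aux {q r : ℝ} (hq0 : 0 < q) (hq1 : q < 1) (hr0 : 0 < r) (hr1 : r < 1) :
    q * Real.log (q / r) + (1 - q) * Real.log ((1 - q) / (1 - r))
      ≤ (q - r) ^ 2 / (r * (1 - r)) := by
  have hr1' : (0:ℝ) < 1 - r := by linarith
  have h1 : Real.log (q / r) ≤ q / r - 1 :=
    Real.log_le_sub_one_of_pos (div_pos hq0 hr0)
  have h2 : Real.log ((1 - q) / (1 - r)) ≤ (1 - q) / (1 - r) - 1 :=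
    Real.log_le_sub_one_of_pos (div_pos (by linarith) hr1')
  have b1 : q * Real.log (q / r) ≤ q * (q / r - 1) :=
    mul_le_mul_of_nonneg_left h1 hq0.le
  have b2 : (1 - q) * Real.log ((1 - q) / (1 - r)) ≤ (1 - q) * ((1 - q) / (1 - r) - 1) :=
    mul_le_mul_of_nonneg_left h2 (by linarith)
  have e : q * (q / r - 1) + (1 - q) * ((1 - q) / (1 - r) - 1)
      = (q - r) ^ 2 / (r * (1 - r)) := by
    rw [eq_div_iff (mul_pos hr0 hr1').ne']
    field_simp
    ring
  linarith

/-- Strict positivity of binary KL divergence. -/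
lemma kl_pos_aux {q r : ℝ} (hq0 : 0 < q) (hq1 : q < 1) (hr0 : 0 < r) (hr1 : r < 1)
    (hne : q ≠ r) :
    0 < q * Real.log (q / r) + (1 - q) * Real.log ((1 - q) / (1 - r)) := by
  have hq1' : (0:ℝ) < 1 - q := by linarith
  have hr1' : (0:ℝ) < 1 - r := by linarith
  have hne1 : r / q ≠ 1 := by
    intro h
    apply hne
    field_simp at h
    linarith
  have h1 : Real.log (r / q) < r / q - 1 :=
    Real.log_lt_sub_one_of_pos (div_pos hr0 hq0) hne1
  have h2 : Real.log ((1 - r) / (1 - q)) ≤ (1 - r) / (1 - q) - 1 :=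
    Real.log_le_sub_one_of_pos (div_pos hr1' hq1')
  have b1 : q * Real.log (r / q) < q * (r / q - 1) :=
    mul_lt_mul_of_pos_left h1 hq0
  have b2 : (1 - q) * Real.log ((1 - r) / (1 - q)) ≤ (1 - q) * ((1 - r) / (1 - q) - 1) :=
    mul_le_mul_of_nonneg_left h2 hq1'.le
  have c1 : q * (r / q - 1) = r - q := by field_simp
  have c2 : (1 - q) * ((1 - r) / (1 - q) - 1) = q - r := by
    field_simp [hq1'.ne']
    ring
  have e1 : Real.log (q / r) = - Real.log (r / q) := by
    rw [Real.log_div hq0.ne' hr0.ne', Real.log_div hr0.ne' hq0.ne']; ring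
  have e2 : Real.log ((1 - q) / (1 - r)) = - Real.log ((1 - r) / (1 - q)) := by
    rw [Real.log_div hq1'.ne' hr1'.ne', Real.log_div hr1'.ne' hq1'.ne']; ring
  rw [e1, e2]
  nlinarith [b1, b2, c1, c2]

set_option maxHeartbeats 1600000 in
/-- Lower bound on the Shannon information ratio at time 0 in Example 1. -/
theorem stmt_14 (K : ℕ) (hK : 2 ≤ K) (p ε : ℝ)
    (hp : p ∈ Set.Ioo (0:ℝ) 1) (hε : ε ∈ Set.Ioo 0 (1 - p))
    (h1 : ε < min p (1 - p))
    (h2 : (ε / K) ^ 2 ≤ p * (1 - p) / 2)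
    (h3 : (ε / K) ^ 2 ≤ p * (1 - p) / 4)
    (h4 : (ε / K) * |2 * p - 1| ≤ p * (1 - p) / 4)
    (h5 : ε ≤ ((K:ℝ) - 1) / (K:ℝ) ^ 2 * (p / (1 - p)))
    (h6 : ε ≤ (1 - p) / K)
    (h7 : ε ≤ ((K:ℝ) - 1) / K * (2 / 3) * ((1 - p) / p))
    (kl : ℝ → ℝ → ℝ)
    (hkl : ∀ q r, kl q r =
      q * Real.log (q / r) + (1 - q) * Real.log ((1 - q) / (1 - r)))
    (π : Fin K → ℝ) (hπ0 : ∀ a, 0 ≤ π a) (hπ1 : ∑ a, π a = 1)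
    (Δ g : ℝ)
    (hΔ : Δ = (∑ _a : Fin K, (1 / (K:ℝ)) * (p + ε))
      - (∑ a : Fin K, π a * (p + ε / K)))
    (hg : g = ∑ a : Fin K, ∑ astar : Fin K,
      π a * (1 / (K:ℝ)) * kl (if a = astar then p + ε else p) (p + ε / K)) :
    (2 / 5) * p * (1 - p) * ((K:ℝ) - 1) ≤ Δ ^ 2 / g ∧
    (p = 1 / 2 → (K:ℝ) / 20 ≤ Δ ^ 2 / g) := by
  obtain ⟨hp0, hp1⟩ := hp
  obtain ⟨hε0, hε1⟩ := hε
  have hK2 : (2:ℝ) ≤ (K:ℝ) := by exact_mod_cast hK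
  have hKpos : (0:ℝ) < (K:ℝ) := by linarith
  have hKne : (K:ℝ) ≠ 0 := hKpos.ne'
  set q : ℝ := p + ε / K with hqdef
  clear_value q
  -- basic facts about q
  have hεK : 0 < ε / K := div_pos hε0 hKpos
  have hεKlt : ε / K < ε := by
    rw [div_lt_iff₀ hKpos]; nlinarith
  have hq0 : 0 < q := by rw [hqdef]; linarith
  have hq1 : q < 1 := by rw [hqdef]; linarith
  have hpε0 : 0 < p + ε := by linarith
  have hpε1 : p + ε < 1 := by linarith
  -- simplify Δ
  have hΔval : Δ = ε * ((K:ℝ) - 1) / K := by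
    rw [hΔ, Finset.sum_const, Finset.card_univ, Fintype.card_fin, ← Finset.sum_mul,
      hπ1, one_mul, hqdef, nsmul_eq_mul]
    field_simp
    ring
  -- simplify g
  have hinner : ∀ a : Fin K,
      (∑ astar : Fin K, π a * (1 / (K:ℝ)) * kl (if a = astar then p + ε else p) q)
      = π a * ((1 / (K:ℝ)) * (kl (p + ε) q + ((K:ℝ) - 1) * kl p q)) := by
    intro a
    have step : ∀ astar : Fin K,
        π a * (1 / (K:ℝ)) * kl (if a = astar then p + ε else p) q
        = π a * (1 / (K:ℝ)) * kl p q
          + (if a = astar then π a * (1 / (K:ℝ)) * (kl (p + ε) q - kl p q) else 0) := by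
      intro astar
      split_ifs <;> ring
    rw [Finset.sum_congr rfl (fun x _ => step x), Finset.sum_add_distrib,
      Finset.sum_const, Finset.card_univ, Fintype.card_fin, Finset.sum_ite_eq]
    simp only [Finset.mem_univ, if_true, nsmul_eq_mul]
    ring
  have hgval : g = (1 / (K:ℝ)) * (kl (p + ε) q + ((K:ℝ) - 1) * kl p q) := by
    rw [hg]
    rw [Finset.sum_congr rfl (fun a _ => hinner a), ← Finset.sum_mul, hπ1, one_mul]
  -- bound the two kl terms
  have hub1 : kl (p + ε) q ≤ ((p + ε) - q) ^ 2 / (q * (1 - q)) := by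
    rw [hkl]; exact kl_ub_aux hpε0 hpε1 hq0 hq1
  have hub2 : kl p q ≤ (p - q) ^ 2 / (q * (1 - q)) := by
    rw [hkl]; exact kl_ub_aux hp0 hp1 hq0 hq1
  have hpos1 : 0 < kl (p + ε) q := by
    rw [hkl]
    refine kl_pos_aux hpε0 hpε1 hq0 hq1 ?_
    intro h
    rw [hqdef] at h
    linarith
  have hpos2 : 0 < kl p q := by
    rw [hkl]
    refine kl_pos_aux hp0 hp1 hq0 hq1 ?_
    intro h
    rw [hqdef] at h
    linarith
  have hK1 : (0:ℝ) < (K:ℝ) - 1 := by linarith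
  have hgpos : 0 < g := by
    rw [hgval]
    have h : 0 < kl (p + ε) q + ((K:ℝ) - 1) * kl p q := by nlinarith
    positivity
  set D : ℝ := q * (1 - q) with hDdef
  clear_value D
  have hD : 0 < D := by rw [hDdef]; exact mul_pos hq0 (by linarith)
  -- upper bound on g
  have hgub : g ≤ ε ^ 2 * ((K:ℝ) - 1) / ((K:ℝ) ^ 2 * D) := by
    rw [hgval]
    have e1 : (p + ε) - q = ε * ((K:ℝ) - 1) / K := by
      rw [hqdef]; field_simp; ring
    have e2 : p - q = -(ε / K) := by rw [hqdef]; ring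
    have key : (1 / (K:ℝ)) * ((ε * ((K:ℝ) - 1) / K) ^ 2 / D + ((K:ℝ) - 1) * ((-(ε / K)) ^ 2 / D))
        = ε ^ 2 * ((K:ℝ) - 1) / ((K:ℝ) ^ 2 * D) := by
      field_simp
      ring
    have step : kl (p + ε) q + ((K:ℝ) - 1) * kl p q
        ≤ (ε * ((K:ℝ) - 1) / K) ^ 2 / D + ((K:ℝ) - 1) * ((-(ε / K)) ^ 2 / D) := by
      rw [← e1, ← e2]
      have h := mul_le_mul_of_nonneg_left hub2 hK1.le
      linarith [hub1, h]
    calc (1 / (K:ℝ)) * (kl (p + ε) q + ((K:ℝ) - 1) * kl p q)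
        ≤ (1 / (K:ℝ)) * ((ε * ((K:ℝ) - 1) / K) ^ 2 / D + ((K:ℝ) - 1) * ((-(ε / K)) ^ 2 / D)) := by
          apply mul_le_mul_of_nonneg_left step (by positivity)
      _ = ε ^ 2 * ((K:ℝ) - 1) / ((K:ℝ) ^ 2 * D) := key
  -- main comparison
  have hUpos : 0 < ε ^ 2 * ((K:ℝ) - 1) / ((K:ℝ) ^ 2 * D) := by
    apply div_pos (by positivity) (by positivity)
  have hmono : Δ ^ 2 / (ε ^ 2 * ((K:ℝ) - 1) / ((K:ℝ) ^ 2 * D)) ≤ Δ ^ 2 / g := by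
    gcongr
  have hcalc : Δ ^ 2 / (ε ^ 2 * ((K:ℝ) - 1) / ((K:ℝ) ^ 2 * D)) = ((K:ℝ) - 1) * D := by
    rw [hΔval]
    rw [div_eq_iff hUpos.ne']
    field_simp
  have hDlb : (3 / 4) * (p * (1 - p)) ≤ D := by
    have hεKsmall : ε / K ≤ (1 - p) / 4 := by
      have h6' : ε * K ≤ 1 - p := (le_div_iff₀ hKpos).mp h6
      rw [div_le_div_iff₀ hKpos (by norm_num : (0:ℝ) < 4)]
      have hKsq : (4:ℝ) ≤ (K:ℝ) * K := by nlinarith [hK2]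
      have h4e : (4:ℝ) * ε ≤ ε * K * K := by
        have := mul_le_mul_of_nonneg_left hKsq hε0.le
        linarith [this]
      have hKK : ε * K * K ≤ (1 - p) * K := mul_le_mul_of_nonneg_right h6' hKpos.le
      linarith
    have hqlb : p ≤ q := by rw [hqdef]; linarith
    have hqub : (3 / 4) * (1 - p) ≤ 1 - q := by rw [hqdef]; linarith
    calc (3 / 4) * (p * (1 - p)) = p * ((3 / 4) * (1 - p)) := by ring
      _ ≤ q * (1 - q) := mul_le_mul hqlb hqub (by linarith) hq0.le
      _ = D := hDdef.symm
  have hfinal : (2 / 5) * p * (1 - p) * ((K:ℝ) - 1) ≤ Δ ^ 2 / g := by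
    rw [hcalc] at hmono
    nlinarith [mul_le_mul_of_nonneg_left hDlb hK1.le]
  refine ⟨hfinal, fun hphalf => ?_⟩
  rw [hphalf] at hfinal
  nlinarith [hfinal]
end

section
/- Let p, ε ∈ (0,1) with p + ε ≤ 1, K ≥ 2, and let q : A → [0,1] be a posterior over the optimal arm with q_max = max_a q(a). In the Bernoulli bandit where arm a has conditional mean p+ε if a = A_* and p otherwise, the Shannon information gain under Thompson sampling, g = Σ_{a,a_*} q(a) q(a_*) D_KL(Bernoulli(mean of R_a given A_*=a_*) ‖ Bernoulli(p + ε q(a))), satisfies g ≥ 2 ε² q_max² (1 − q_max)². -/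
open Real

/-- The auxiliary function `G x = log x - log (1-x) - 4x` is monotone on `(0,1)`. -/
lemma G_mono : MonotoneOn (fun x : ℝ => Real.log x - Real.log (1 - x) - 4 * x)
    (Set.Ioo (0:ℝ) 1) := by
  have hderiv : ∀ x ∈ Set.Ioo (0:ℝ) 1,
      HasDerivAt (fun x : ℝ => Real.log x - Real.log (1 - x) - 4 * x)
        (1/x + 1/(1-x) - 4) x := by
    intro x hx
    have hx0 : x ≠ 0 := ne_of_gt hx.1
    have hx1 : (1:ℝ) - x ≠ 0 := ne_of_gt (by linarith [hx.2] : (0:ℝ) < 1 - x)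
    have h1 : HasDerivAt Real.log (1/x) x := by
      simpa [one_div] using Real.hasDerivAt_log hx0
    have h2i : HasDerivAt (fun x : ℝ => 1 - x) (-1) x := by
      simpa using (hasDerivAt_id' x).const_sub (1:ℝ)
    have h2 : HasDerivAt (fun x : ℝ => Real.log (1 - x)) ((1-x)⁻¹ * (-1)) x :=
      (Real.hasDerivAt_log hx1).comp x h2i
    have h3 : HasDerivAt (fun x : ℝ => 4 * x) 4 x := by
      simpa using (hasDerivAt_id x).const_mul (4:ℝ)
    have := (h1.sub h2).sub h3
    refine this.congr_deriv ?_
    ring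
  apply monotoneOn_of_deriv_nonneg (convex_Ioo _ _)
  · exact fun x hx => (hderiv x hx).continuousAt.continuousWithinAt
  · rw [interior_Ioo]
    exact fun x hx => (hderiv x hx).differentiableAt.differentiableWithinAt
  · rw [interior_Ioo]
    intro x hx
    rw [(hderiv x hx).deriv]
    have hx0 : 0 < x := hx.1
    have hx1 : 0 < 1 - x := by linarith [hx.2]
    have hq : 4 * (x * (1 - x)) ≤ 1 := by nlinarith [sq_nonneg (x - 1/2)]
    have heq : 1/x + 1/(1-x) = 1/(x*(1-x)) := by field_simp; ring
    have : (4:ℝ) ≤ 1/(x*(1-x)) := by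
      rw [le_div_iff₀ (by positivity)]; linarith
    linarith [heq ▸ this]

/-- Pinsker's inequality for Bernoulli distributions. -/
lemma bern_pinsker {s r : ℝ} (hs0 : 0 < s) (hs1 : s ≤ 1) (hr0 : 0 < r) (hr1 : r < 1) :
    2 * (s - r) ^ 2 ≤ s * Real.log (s / r) + (1 - s) * Real.log ((1 - s) / (1 - r)) := by
  set G : ℝ → ℝ := fun x => Real.log x - Real.log (1 - x) - 4 * x with hG
  set F : ℝ → ℝ := fun x => x * Real.log x - x * Real.log r
      + (1 - x) * Real.log (1 - x) - (1 - x) * Real.log (1 - r) - 2 * (x - r) ^ 2 with hF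
  -- the goal reduces to `0 ≤ F s`
  have hgoal : s * Real.log (s / r) + (1 - s) * Real.log ((1 - s) / (1 - r)) - 2 * (s - r) ^ 2
      = F s := by
    rcases eq_or_lt_of_le hs1 with h1 | h1
    · subst h1
      simp [hF, Real.log_div one_ne_zero (ne_of_gt hr0), Real.log_one]
    · rw [Real.log_div (ne_of_gt hs0) (ne_of_gt hr0),
        Real.log_div (by linarith : (1:ℝ) - s ≠ 0) (by linarith : (1:ℝ) - r ≠ 0)]
      simp [hF]; ring
  rw [← sub_nonneg, hgoal]
  -- F is continuous everywhere
  have hFc : Continuous F := by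
    have h1 : Continuous fun x : ℝ => x * Real.log x := Real.continuous_mul_log
    have h2 : Continuous fun x : ℝ => (1 - x) * Real.log (1 - x) :=
      Real.continuous_mul_log.comp (continuous_const.sub continuous_id)
    fun_prop
  -- derivative of F on (0,1)
  have hF' : ∀ x ∈ Set.Ioo (0:ℝ) 1, HasDerivAt F (G x - G r) x := by
    intro x hx
    have hx0 : x ≠ 0 := ne_of_gt hx.1
    have hx1 : (1:ℝ) - x ≠ 0 := ne_of_gt (by linarith [hx.2] : (0:ℝ) < 1 - x)
    have h1 : HasDerivAt (fun x : ℝ => x * Real.log x) (Real.log x + 1) x :=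
      Real.hasDerivAt_mul_log hx0
    have h2 : HasDerivAt (fun x : ℝ => x * Real.log r) (Real.log r) x := by
      simpa using (hasDerivAt_id x).mul_const (Real.log r)
    have h3i : HasDerivAt (fun x : ℝ => 1 - x) (-1) x := by
      simpa using (hasDerivAt_id' x).const_sub (1:ℝ)
    have h3 : HasDerivAt (fun x : ℝ => (1 - x) * Real.log (1 - x))
        ((Real.log (1 - x) + 1) * (-1)) x :=
      (Real.hasDerivAt_mul_log hx1).comp x h3i
    have h4 : HasDerivAt (fun x : ℝ => (1 - x) * Real.log (1 - r)) ((-1) * Real.log (1 - r)) x :=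
      h3i.mul_const _
    have h5 : HasDerivAt (fun x : ℝ => 2 * (x - r) ^ 2) (2 * (2 * (x - r))) x := by
      have : HasDerivAt (fun x : ℝ => (x - r) ^ 2) (2 * (x - r) ^ 1 * 1) x :=
        ((hasDerivAt_id x).sub_const r).pow 2
      simpa using this.const_mul (2:ℝ)
    have := ((((h1.sub h2).add h3).sub h4).sub h5)
    refine this.congr_deriv ?_
    simp [hG]; ring
  have hFr : F r = 0 := by simp [hF]
  rcases le_or_gt r s with hrs | hrs
  · -- F monotone on [r, 1]
    have hsub : Set.Ioo r 1 ⊆ Set.Ioo (0:ℝ) 1 := fun x hx => ⟨lt_trans hr0 hx.1, hx.2⟩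
    have hmono : MonotoneOn F (Set.Icc r 1) := by
      apply monotoneOn_of_deriv_nonneg (convex_Icc _ _) hFc.continuousOn
      · rw [interior_Icc]
        exact fun x hx => ((hF' x (hsub hx)).differentiableAt).differentiableWithinAt
      · rw [interior_Icc]
        intro x hx
        rw [(hF' x (hsub hx)).deriv, sub_nonneg]
        exact G_mono ⟨hr0, hr1⟩ (hsub hx) hx.1.le
    have := hmono ⟨le_refl r, hr1.le⟩ ⟨hrs, hs1⟩ hrs
    linarith [hFr ▸ this]
  · -- F antitone on [s, r]
    have hsub : Set.Ioo s r ⊆ Set.Ioo (0:ℝ) 1 := fun x hx => ⟨lt_trans hs0 hx.1, lt_trans hx.2 hr1⟩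
    have hanti : AntitoneOn F (Set.Icc s r) := by
      apply antitoneOn_of_deriv_nonpos (convex_Icc _ _) hFc.continuousOn
      · rw [interior_Icc]
        exact fun x hx => ((hF' x (hsub hx)).differentiableAt).differentiableWithinAt
      · rw [interior_Icc]
        intro x hx
        rw [(hF' x (hsub hx)).deriv, sub_nonpos]
        exact G_mono (hsub hx) ⟨hr0, hr1⟩ hx.2.le
    have := hanti ⟨le_refl s, hrs.le⟩ ⟨hrs.le, le_refl r⟩ hrs.le
    linarith [hFr ▸ this]

lemma kl_self_eq_zero (s : ℝ) (hs : 0 < s) :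
    s * Real.log (s / s) + (1 - s) * Real.log ((1 - s) / (1 - s)) = 0 := by
  rcases eq_or_ne s 1 with h | h
  · simp [h]
  · rw [div_self (ne_of_gt hs), div_self (sub_ne_zero.2 (Ne.symm h))]
    simp

/-- Lower bound on the Shannon information gain under Thompson sampling in Example 1. -/
theorem stmt_17 (K : ℕ) (hK : 2 ≤ K) (p ε : ℝ)
    (hp : p ∈ Set.Ioo (0:ℝ) 1) (hε : ε ∈ Set.Ioo (0:ℝ) 1) (hpε : p + ε ≤ 1)
    (q : Fin K → ℝ) (hq0 : ∀ a, 0 ≤ q a) (hq1 : ∑ a, q a = 1)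
    (qmax : ℝ) (hub : ∀ a, q a ≤ qmax) (hmem : ∃ a, q a = qmax)
    (kl : ℝ → ℝ → ℝ)
    (hkl : ∀ s r, kl s r =
      s * Real.log (s / r) + (1 - s) * Real.log ((1 - s) / (1 - r))) :
    2 * ε ^ 2 * qmax ^ 2 * (1 - qmax) ^ 2 ≤
      ∑ a : Fin K, ∑ astar : Fin K,
        q a * q astar * kl (if a = astar then p + ε else p) (p + ε * q a) := by
  obtain ⟨am, ham⟩ := hmem
  have hqmax0 : 0 ≤ qmax := ham ▸ hq0 am
  have hqmax1 : qmax ≤ 1 := by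
    have := Finset.single_le_sum (f := q) (fun a _ => hq0 a) (Finset.mem_univ am)
    rw [hq1] at this; linarith [ham ▸ this]
  rcases eq_or_lt_of_le hqmax1 with hq1' | hq1'
  · -- qmax = 1 : the bound is trivial, every summand is zero or nonneg
    have hz : ∀ b, b ≠ am → q b = 0 := by
      intro b hb
      have hsum : q am + ∑ x ∈ Finset.univ.erase am, q x = 1 := by
        rw [Finset.add_sum_erase _ _ (Finset.mem_univ am), hq1]
      have hzero : ∑ x ∈ Finset.univ.erase am, q x = 0 := by
        rw [ham, hq1'] at hsum; linarith
      exact (Finset.sum_eq_zero_iff_of_nonneg (fun x _ => hq0 x)).1 hzero b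
        (Finset.mem_erase.2 ⟨hb, Finset.mem_univ b⟩)
    have hrhs : 2 * ε ^ 2 * qmax ^ 2 * (1 - qmax) ^ 2 = 0 := by rw [← hq1']; ring
    rw [hrhs]
    apply Finset.sum_nonneg; intro a _
    apply Finset.sum_nonneg; intro astar _
    rcases eq_or_ne (q a) 0 with h | h
    · simp [h]
    rcases eq_or_ne (q astar) 0 with h' | h'
    · simp [h']
    have ha : a = am := by by_contra hc; exact h (hz a hc)
    have ha' : astar = am := by by_contra hc; exact h' (hz astar hc)
    subst ha; subst ha'
    rw [if_pos rfl, hkl, ham, hq1']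
    have heps : p + ε * 1 = p + ε := by ring
    rw [heps, kl_self_eq_zero (p + ε) (by linarith [hp.1, hε.1])]
    simp
  · -- qmax < 1 : use Pinsker on the diagonal term at the best arm
    have hεpos := hε.1
    have hppos := hp.1
    -- nonnegativity of every summand
    have hterm : ∀ a astar : Fin K,
        0 ≤ q a * q astar * kl (if a = astar then p + ε else p) (p + ε * q a) := by
      intro a astar
      have hr0 : 0 < p + ε * q a := by
        have : 0 ≤ ε * q a := mul_nonneg hεpos.le (hq0 a)
        linarith
      have hr1 : p + ε * q a < 1 := by
        have h1 : ε * q a ≤ ε * qmax := mul_le_mul_of_nonneg_left (hub a) hεpos.le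
        have h2 : ε * qmax < ε * 1 := by
          apply mul_lt_mul_of_pos_left hq1' hεpos
        linarith
      have hklnn : 0 ≤ kl (if a = astar then p + ε else p) (p + ε * q a) := by
        rw [hkl]
        split_ifs with h
        · exact le_trans (by positivity) (bern_pinsker (by linarith) hpε hr0 hr1)
        · exact le_trans (by positivity) (bern_pinsker hppos hp.2.le hr0 hr1)
      exact mul_nonneg (mul_nonneg (hq0 a) (hq0 astar)) hklnn
    -- single diagonal term bound
    have hkey : 2 * ε ^ 2 * qmax ^ 2 * (1 - qmax) ^ 2 ≤
        q am * q am * kl (if am = am then p + ε else p) (p + ε * q am) := by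
      rw [if_pos rfl, hkl, ham]
      have hr0 : 0 < p + ε * qmax := by positivity
      have hr1 : p + ε * qmax < 1 := by nlinarith
      have hpin := bern_pinsker (show 0 < p + ε by linarith) hpε hr0 hr1
      have heq : (p + ε - (p + ε * qmax)) ^ 2 = ε ^ 2 * (1 - qmax) ^ 2 := by ring
      calc 2 * ε ^ 2 * qmax ^ 2 * (1 - qmax) ^ 2
          = qmax * qmax * (2 * (p + ε - (p + ε * qmax)) ^ 2) := by rw [heq]; ring
        _ ≤ qmax * qmax * ((p + ε) * Real.log ((p + ε) / (p + ε * qmax))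
            + (1 - (p + ε)) * Real.log ((1 - (p + ε)) / (1 - (p + ε * qmax)))) :=
            mul_le_mul_of_nonneg_left hpin (by positivity)
    calc 2 * ε ^ 2 * qmax ^ 2 * (1 - qmax) ^ 2
        ≤ q am * q am * kl (if am = am then p + ε else p) (p + ε * q am) := hkey
      _ ≤ ∑ astar : Fin K, q am * q astar * kl (if am = astar then p + ε else p)
            (p + ε * q am) :=
          Finset.single_le_sum (fun astar _ => hterm am astar) (Finset.mem_univ am)
      _ ≤ ∑ a : Fin K, ∑ astar : Fin K,
            q a * q astar * kl (if a = astar then p + ε else p) (p + ε * q a) :=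
          Finset.single_le_sum
            (f := fun a => ∑ astar : Fin K,
              q a * q astar * kl (if a = astar then p + ε else p) (p + ε * q a))
            (fun a _ => Finset.sum_nonneg fun astar _ => hterm a astar) (Finset.mem_univ am)
end

section
/- Let q_t ∈ (1/2, 1] and ε > 0, and suppose Δ ≤ ε(1 − q_t²) and g ≥ 2ε² q_t²(1 − q_t)² with g > 0. Then the ratio Γ = Δ²/g satisfies Γ ≤ (1+q_t)²/(2 q_t²) ≤ 8. -/
/-- When the maximal posterior probability exceeds 1/2, the Shannon information ratio
of Thompson sampling is at most 8. -/
theorem stmt_18 (q ε Δ g : ℝ) (hq : q ∈ Set.Ioc (1/2 : ℝ) 1) (hε : 0 < ε)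
    (hΔ0 : 0 ≤ Δ) (hΔ : Δ ≤ ε * (1 - q ^ 2))
    (hg : 2 * ε ^ 2 * q ^ 2 * (1 - q) ^ 2 ≤ g) (hgpos : 0 < g) :
    Δ ^ 2 / g ≤ (1 + q) ^ 2 / (2 * q ^ 2) ∧ Δ ^ 2 / g ≤ 8 := by
  obtain ⟨hq1, hq2⟩ := hq
  have hq0 : 0 < q := by linarith
  have h1 : Δ ^ 2 / g ≤ (1 + q) ^ 2 / (2 * q ^ 2) := by
    rw [div_le_div_iff₀ hgpos (by positivity)]
    have hΔsq : Δ ^ 2 ≤ (ε * (1 - q ^ 2)) ^ 2 := by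
      apply pow_le_pow_left₀ hΔ0 hΔ
    nlinarith [sq_nonneg ε, sq_nonneg (1 - q), sq_nonneg (1 + q), sq_nonneg q,
      mul_nonneg (mul_nonneg (sq_nonneg ε) (sq_nonneg (1 - q))) (sq_nonneg (1 + q))]
  refine ⟨h1, h1.trans ?_⟩
  rw [div_le_iff₀ (by positivity)]
  nlinarith
end
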